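/- Let G = (V,E) be a finite directed graph and t ≥ 1 an integer. For any x : E → ℝ with x(e) ≥ 0 for all e ∈ E, the following are equivalent: (i) for every (u,v) ∈ E and every z ∈ Z^{u,v}, ∑_{e∈E} z(e)·x(e) ≥ 1; (ii) there exist nonnegative reals f_P, one for every (u,v) ∈ E and every P ∈ P_{u,v}, such that for every (u,v) ∈ E we have ∑_{P∈P_{u,v}} f_P ≥ 1, and for every (u,v) ∈ E and every e ∈ E we have ∑_{P∈P_{u,v} : e∈P} f_P ≤ x(e). -/

import Mathlib

open Finset Filter Topology RealInnerProductSpace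

lemma farkas_flow {ι κ : Type*} [Fintype ι] [Fintype κ]
    (A : ι → κ → ℝ) (hA : ∀ i j, 0 ≤ A i j) (hA1 : ∀ i, ∃ j, 1 ≤ A i j)
    (x : κ → ℝ) (hx : ∀ j, 0 ≤ x j)
    (H : ∀ z : κ → ℝ, (∀ j, 0 ≤ z j) → (∀ i, 1 ≤ ∑ j, A i j * z j) →
      1 ≤ ∑ j, z j * x j) :
    ∃ f : ι → ℝ, (∀ i, 0 ≤ f i) ∧ 1 ≤ ∑ i, f i ∧ ∀ j, (∑ i, f i * A i j) ≤ x j := by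
  classical
  by_contra hcon
  -- the cone of "achievable demands"
  set Car : Set (EuclideanSpace ℝ (Option κ)) :=
    {w | ∃ f : ι → ℝ, (∀ i, 0 ≤ f i) ∧ (∀ j, ∑ i, f i * A i j ≤ w (some j)) ∧
      w none ≤ ∑ i, f i} with hCar
  have hsmul : ∀ ⦃c : ℝ⦄, 0 < c → ∀ ⦃w : EuclideanSpace ℝ (Option κ)⦄, w ∈ Car → c • w ∈ Car := by
    rintro c hc w ⟨f, hf0, hfA, hfs⟩
    refine ⟨c • f, fun i => mul_nonneg hc.le (hf0 i), fun j => ?_, ?_⟩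
    · have : ∑ i, (c • f) i * A i j = c * ∑ i, f i * A i j := by
        rw [Finset.mul_sum]; congr 1; ext i; simp [mul_assoc]
      rw [this]
      calc c * ∑ i, f i * A i j ≤ c * w (some j) :=
            mul_le_mul_of_nonneg_left (hfA j) hc.le
        _ = (c • w) (some j) := by simp
    · have : ∑ i, (c • f) i = c * ∑ i, f i := by rw [Finset.mul_sum]; rfl
      rw [this]
      calc (c • w) none = c * w none := by simp
        _ ≤ c * ∑ i, f i := mul_le_mul_of_nonneg_left hfs hc.le
  have hadd : ∀ ⦃w : EuclideanSpace ℝ (Option κ)⦄, w ∈ Car →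
      ∀ ⦃v : EuclideanSpace ℝ (Option κ)⦄, v ∈ Car → w + v ∈ Car := by
    rintro w ⟨f, hf0, hfA, hfs⟩ v ⟨g, hg0, hgA, hgs⟩
    refine ⟨f + g, fun i => add_nonneg (hf0 i) (hg0 i), fun j => ?_, ?_⟩
    · have : ∑ i, (f + g) i * A i j = (∑ i, f i * A i j) + ∑ i, g i * A i j := by
        rw [← Finset.sum_add_distrib]; congr 1; ext i; simp [add_mul]
      rw [this]
      exact le_trans (add_le_add (hfA j) (hgA j)) (by simp)
    · have : ∑ i, (f + g) i = (∑ i, f i) + ∑ i, g i := by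
        rw [← Finset.sum_add_distrib]; rfl
      rw [this]
      exact le_trans (by simp : (w + v) none ≤ w none + v none)
        (add_le_add hfs hgs)
  set C : ConvexCone ℝ (EuclideanSpace ℝ (Option κ)) :=
    { carrier := Car, smul_mem' := hsmul, add_mem' := hadd } with hC
  -- closedness of the cone
  have hclosed : IsClosed Car := by
    rw [← isSeqClosed_iff_isClosed]
    intro w l hw hlim
    choose f hf0 hfA hfs using hw
    have hcoord : ∀ o, Tendsto (fun n => w n o) atTop (𝓝 (l o)) := by
      intro o
      exact ((EuclideanSpace.proj o).continuous.tendsto l).comp hlim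
    choose jj hjj using hA1
    have hbdd : ∀ j : κ, ∃ M, ∀ n, w n (some j) ≤ M := by
      intro j
      obtain ⟨M, hM⟩ := (hcoord (some j)).bddAbove_range
      exact ⟨M, fun n => hM ⟨n, rfl⟩⟩
    choose M hM using hbdd
    have hbox : ∀ n, f n ∈ Set.pi Set.univ (fun i => Set.Icc (0:ℝ) (M (jj i))) := by
      intro n i _
      refine ⟨hf0 n i, ?_⟩
      calc f n i = f n i * 1 := (mul_one _).symm
        _ ≤ f n i * A i (jj i) := mul_le_mul_of_nonneg_left (hjj i) (hf0 n i)
        _ ≤ ∑ i', f n i' * A i' (jj i) :=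
            Finset.single_le_sum (fun i' _ => mul_nonneg (hf0 n i') (hA i' (jj i)))
              (Finset.mem_univ i)
        _ ≤ w n (some (jj i)) := hfA n (jj i)
        _ ≤ M (jj i) := hM (jj i) n
    obtain ⟨g, hgK, φ, hφ, hφlim⟩ :=
      (isCompact_univ_pi (fun i => isCompact_Icc)).tendsto_subseq hbox
    have hgcoord : ∀ i, Tendsto (fun n => f (φ n) i) atTop (𝓝 (g i)) := by
      intro i
      exact (continuous_apply i).continuousAt.tendsto.comp hφlim
    refine ⟨g, fun i => (hgK i (Set.mem_univ i)).1, fun j => ?_, ?_⟩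
    · refine le_of_tendsto_of_tendsto'
        (tendsto_finset_sum Finset.univ (fun i _ => (hgcoord i).mul_const (A i j)))
        ((hcoord (some j)).comp hφ.tendsto_atTop) (fun n => hfA (φ n) j)
    · refine le_of_tendsto_of_tendsto'
        ((hcoord none).comp hφ.tendsto_atTop)
        (tendsto_finset_sum Finset.univ (fun i _ => hgcoord i)) (fun n => hfs (φ n))
  -- the point to separate
  set b : EuclideanSpace ℝ (Option κ) := WithLp.toLp 2 (fun o : Option κ => o.elim 1 x) with hb
  have hbnot : b ∉ C := by
    rintro ⟨f, hf0, hfA, hfs⟩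
    exact hcon ⟨f, hf0, hfs, hfA⟩
  have hne : (C : Set (EuclideanSpace ℝ (Option κ))).Nonempty := by
    refine ⟨0, 0, fun i => le_refl 0, fun j => ?_, ?_⟩ <;> simp
  obtain ⟨y, hyC, hyb⟩ : ∃ y : EuclideanSpace ℝ (Option κ),
      (∀ x ∈ C, 0 ≤ inner ℝ x y) ∧ inner ℝ y b < 0 := by
    obtain ⟨y, hy1, hy2⟩ := ProperCone.hyperplane_separation' (E := EuclideanSpace ℝ (Option κ))
      ⟨C.toPointedCone (ConvexCone.Pointed.of_nonempty_of_isClosed hne hclosed), hclosed⟩ hbnot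
    exact ⟨y, hy1, by rwa [real_inner_comm]⟩
  -- extract the dual solution
  set z : κ → ℝ := fun j => y (some j) with hz
  have hinner : ∀ v : EuclideanSpace ℝ (Option κ),
      inner ℝ v y = v none * y none + ∑ j, v (some j) * y (some j) := by
    intro v
    rw [PiLp.inner_apply]
    simp [Fintype.sum_option, mul_comm]
  have hz0 : ∀ j, 0 ≤ z j := by
    intro j
    have hmem : (EuclideanSpace.single (some j) (1:ℝ)) ∈ C := by
      refine ⟨0, fun i => le_refl 0, fun j' => ?_, ?_⟩ <;>
        simp [EuclideanSpace.single_apply]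
      · split <;> simp
    have := hyC _ hmem
    rw [hinner] at this
    simpa [EuclideanSpace.single_apply] using this
  have hμ : 0 ≤ -(y none) := by
    have hmem : (-(EuclideanSpace.single none (1:ℝ))) ∈ C := by
      refine ⟨0, fun i => le_refl 0, fun j' => ?_, ?_⟩ <;>
        simp [EuclideanSpace.single_apply]
    have := hyC _ hmem
    rw [hinner] at this
    simpa [EuclideanSpace.single_apply] using this
  have hrow : ∀ i, -(y none) ≤ ∑ j, A i j * z j := by
    intro i
    have hmem : (WithLp.toLp 2 (fun o : Option κ => o.elim 1 (A i)) : EuclideanSpace ℝ (Option κ)) ∈ C := by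
      refine ⟨fun i' => if i' = i then 1 else 0, fun i' => by positivity, fun j => ?_, ?_⟩
      · simp [ite_mul, Finset.sum_ite_eq']
      · simp
    have := hyC _ hmem
    rw [hinner] at this
    simp only [PiLp.toLp_apply, Option.elim] at this
    linarith
  have hxlt : ∑ j, z j * x j < -(y none) := by
    rw [real_inner_comm] at hyb
    rw [hinner] at hyb
    simp only [hb, PiLp.toLp_apply, Option.elim] at hyb
    have : ∀ j, x j * y (some j) = z j * x j := fun j => by rw [hz]; ring
    rw [Finset.sum_congr rfl (fun j _ => this j)] at hyb
    linarith
  have hzx0 : 0 ≤ ∑ j, z j * x j :=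
    Finset.sum_nonneg (fun j _ => mul_nonneg (hz0 j) (hx j))
  have hμpos : 0 < -(y none) := lt_of_le_of_lt hzx0 hxlt
  -- contradiction with H applied to z / μ
  set μ := -(y none) with hμdef
  have := H (fun j => z j / μ) (fun j => div_nonneg (hz0 j) hμpos.le) ?_
  · have hsum : ∑ j, z j / μ * x j = (∑ j, z j * x j) / μ := by
      rw [Finset.sum_div]; congr 1; ext j; ring
    rw [hsum] at this
    have : μ ≤ ∑ j, z j * x j := by
      rwa [le_div_iff₀ hμpos, one_mul] at this
    linarith
  · intro i
    have hsum : ∑ j, A i j * (z j / μ) = (∑ j, A i j * z j) / μ := by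
      rw [Finset.sum_div]; congr 1; ext j; ring
    rw [hsum, le_div_iff₀ hμpos, one_mul]
    exact hrow i

/-- A directed path in the graph with edge set `E`, from `u` to `v`, given as its (nonempty)
list of edges: consecutive edges are incident, the first edge starts at `u`, the last edge ends
at `v`, and no vertex is visited twice. -/
def IsDirPath {V : Type*} [DecidableEq V] (E : Finset (V × V)) (u v : V)
    (p : List (V × V)) : Prop :=
  p ≠ [] ∧ (∀ e ∈ p, e ∈ E) ∧ Option.map Prod.fst p.head? = some u ∧
    Option.map Prod.snd p.getLast? = some v ∧
    List.Chain' (fun e f => e.2 = f.1) p ∧ (u :: p.map Prod.snd).Nodup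

/-- `z ∈ Z^{u,v}`: a fractional cut against the stretch-`t` paths from `u` to `v`, i.e.
`z : E → [0,1]` with `∑_{e ∈ P} z e ≥ 1` for every path `P ∈ 𝒫_{u,v}` (at most `t` edges). -/
def InZ {V : Type*} [DecidableEq V] (E : Finset (V × V)) (t : ℕ) (u v : V)
    (z : V × V → ℝ) : Prop :=
  (∀ e ∈ E, 0 ≤ z e ∧ z e ≤ 1) ∧
  ∀ p : List (V × V), IsDirPath E u v p → p.length ≤ t → 1 ≤ (p.map z).sum

/-- equivalence of `LP_Spanner` and `LP_Spanner^{Flow}`.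
For a finite directed graph `(V, E)`, a stretch `t ≥ 1` and `x : E → ℝ` nonnegative on `E`,
the cut constraints `∑_e z e * x e ≥ 1` (for all `(u,v) ∈ E` and `z ∈ Z^{u,v}`) hold iff
there exist nonnegative flow values `f (u,v) P` on stretch-`t` paths `P ∈ 𝒫_{u,v}` shipping at
least one unit of flow from `u` to `v` for every `(u,v) ∈ E` subject to the capacities `x`. -/
theorem lp_spanner_equiv_flow {V : Type*} [Fintype V] [DecidableEq V]
    (E : Finset (V × V)) (t : ℕ) (ht : 1 ≤ t)
    (x : V × V → ℝ) (hx : ∀ e ∈ E, 0 ≤ x e) :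
    (∀ e ∈ E, ∀ z : V × V → ℝ, InZ E t e.1 e.2 z → 1 ≤ ∑ e' ∈ E, z e' * x e') ↔
    (∃ f : (V × V) → List (V × V) → ℝ,
      (∀ uv P, 0 ≤ f uv P) ∧
      (∀ e ∈ E, 1 ≤ ∑ᶠ P ∈ {p : List (V × V) | IsDirPath E e.1 e.2 p ∧ p.length ≤ t},
        f e P) ∧
      (∀ e ∈ E, ∀ e' ∈ E,
        (∑ᶠ P ∈ {p : List (V × V) | IsDirPath E e.1 e.2 p ∧ p.length ≤ t ∧ e' ∈ p},
          f e P) ≤ x e')) := by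
  classical
  have hfin : ∀ e : V × V, {p : List (V × V) | IsDirPath E e.1 e.2 p ∧ p.length ≤ t}.Finite :=
    fun e => (List.finite_length_le (V × V) t).subset (fun p hp => hp.2)
  obtain ⟨T, hmemT⟩ : ∃ T : (V × V) → Finset (List (V × V)),
      ∀ e p, p ∈ T e ↔ IsDirPath E e.1 e.2 p ∧ p.length ≤ t :=
    ⟨fun e => (hfin e).toFinset, fun e p => Set.Finite.mem_toFinset _⟩
  have hTcoe : ∀ e : V × V,
      {p : List (V × V) | IsDirPath E e.1 e.2 p ∧ p.length ≤ t} = ↑(T e) := by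
    intro e; ext p; simp [hmemT]
  have hnodup : ∀ {u v : V} {p : List (V × V)}, IsDirPath E u v p → p.Nodup := by
    rintro u v p ⟨-, -, -, -, -, hnd⟩
    exact ((List.nodup_cons.mp hnd).2).of_map
  have hfiltereq : ∀ {u v : V} {p : List (V × V)}, IsDirPath E u v p →
      E.filter (fun e' => e' ∈ p) = p.toFinset := by
    intro u v p hp
    ext a
    simp only [Finset.mem_filter, List.mem_toFinset]
    exact ⟨fun h => h.2, fun h => ⟨hp.2.1 a h, h⟩⟩
  have hlistsum : ∀ {u v : V} {p : List (V × V)} (z : V × V → ℝ), IsDirPath E u v p →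
      ∑ e' ∈ E, (if e' ∈ p then z e' else 0) = (p.map z).sum := by
    intro u v p z hp
    rw [← Finset.sum_filter, hfiltereq hp, List.sum_toFinset _ (hnodup hp)]
  constructor
  · -- cut constraints imply existence of a flow
    intro hi
    have key : ∀ e : V × V, ∃ g : List (V × V) → ℝ, (∀ p, 0 ≤ g p) ∧
        (e ∈ E → (1 ≤ ∑ p ∈ T e, g p) ∧
          (∀ e' ∈ E, ∑ p ∈ (T e).filter (fun p => e' ∈ p), g p ≤ x e')) := by
      intro e
      by_cases he : e ∈ E
      · obtain ⟨f, hf0, hf1, hfc⟩ := farkas_flow (ι := {p // p ∈ T e}) (κ := V × V)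
          (fun P e' => if e' ∈ (P : List (V × V)) then (1:ℝ) else 0)
          (fun i j => by positivity)
          (fun i => by
            obtain ⟨hp, hlen⟩ := (hmemT e i.1).1 i.2
            obtain ⟨a, ha⟩ := List.exists_mem_of_ne_nil _ hp.1
            exact ⟨a, by simp [ha]⟩)
          (fun e' => if e' ∈ E then x e' else 0)
          (fun j => by
            by_cases h : j ∈ E
            · simpa [h] using hx j h
            · simp [h])
          (fun z' hz'0 hrows => by
            set z : V × V → ℝ := fun e' => if e' ∈ E then min (z' e') 1 else 0 with hzdef
            have hInZ : InZ E t e.1 e.2 z := by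
              constructor
              · intro e' he'
                simp only [hzdef, he', if_true]
                exact ⟨le_min (hz'0 e') zero_le_one, min_le_right _ _⟩
              · intro p hp hlen
                have hpT : p ∈ T e := (hmemT e p).2 ⟨hp, hlen⟩
                have hrow := hrows ⟨p, hpT⟩
                by_cases hbig : ∃ a ∈ p, 1 ≤ z' a
                · obtain ⟨a, hap, ha1⟩ := hbig
                  have hz_a : z a = 1 := by
                    simp [hzdef, hp.2.1 a hap, min_eq_right ha1]
                  have hnn : ∀ r ∈ p.map z, (0:ℝ) ≤ r := by
                    intro r hr
                    obtain ⟨a', ha', rfl⟩ := List.mem_map.mp hr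
                    simp only [hzdef, hp.2.1 a' ha', if_true]
                    exact le_min (hz'0 a') zero_le_one
                  have := List.single_le_sum hnn (z a) (List.mem_map_of_mem (f := z) hap)
                  linarith [hz_a ▸ this]
                · push_neg at hbig
                  have hzz' : ∀ a ∈ p, z a = z' a := fun a hap => by
                    simp [hzdef, hp.2.1 a hap, min_eq_left (hbig a hap).le]
                  have h2 : ∑ j : V × V, (if j ∈ p then (1:ℝ) else 0) * z' j
                      = (p.map z').sum := by
                    simp only [ite_mul, one_mul, zero_mul]
                    rw [← Finset.sum_filter]
                    have : Finset.univ.filter (fun j : V × V => j ∈ p) = p.toFinset := by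
                      ext a; simp
                    rw [this, List.sum_toFinset _ (hnodup hp)]
                  have h3 : (p.map z').sum = (p.map z).sum := by
                    congr 1
                    exact (List.map_congr_left (fun a ha => (hzz' a ha).symm))
                  calc (1:ℝ) ≤ ∑ j : V × V, (if j ∈ p then (1:ℝ) else 0) * z' j := hrow
                    _ = (p.map z).sum := by rw [h2, h3]
            have hlow := hi e he z hInZ
            calc (1:ℝ) ≤ ∑ e' ∈ E, z e' * x e' := hlow
              _ ≤ ∑ e' ∈ E, z' e' * x e' := by
                  refine Finset.sum_le_sum (fun e' he' => ?_)
                  refine mul_le_mul_of_nonneg_right ?_ (hx e' he')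
                  simp only [hzdef, he', if_true]
                  exact min_le_left _ _
              _ = ∑ j : V × V, z' j * (if j ∈ E then x j else 0) := by
                  symm
                  simp_rw [mul_ite, mul_zero]
                  rw [Finset.sum_ite_mem, Finset.univ_inter]
              )
        refine ⟨fun p => if hp : p ∈ T e then f ⟨p, hp⟩ else 0, ?_, fun _ => ⟨?_, ?_⟩⟩
        · intro p; by_cases hp : p ∈ T e <;> simp [hp, hf0]
        · calc (1:ℝ) ≤ ∑ i : {p // p ∈ T e}, f i := hf1
            _ = ∑ i ∈ (T e).attach, f i := by rw [← Finset.univ_eq_attach]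
            _ = ∑ i ∈ (T e).attach, (if hp : (i:List (V×V)) ∈ T e then f ⟨i, hp⟩ else 0) := by
                refine Finset.sum_congr rfl (fun i _ => ?_)
                rw [dif_pos i.2]
            _ = ∑ p ∈ T e, (if hp : p ∈ T e then f ⟨p, hp⟩ else 0) :=
                Finset.sum_attach (T e) (fun p => if hp : p ∈ T e then f ⟨p, hp⟩ else 0)
        · intro e' he'
          have := hfc e'
          rw [if_pos he'] at this
          calc ∑ p ∈ (T e).filter (fun p => e' ∈ p),
                (if hp : p ∈ T e then f ⟨p, hp⟩ else 0)
              = ∑ p ∈ T e, (if e' ∈ p then (if hp : p ∈ T e then f ⟨p, hp⟩ else 0) else 0) :=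
                (Finset.sum_filter _ _)
            _ = ∑ p ∈ (T e).attach,
                (if e' ∈ (p : List (V × V)) then
                  (if hp : (p : List (V×V)) ∈ T e then f ⟨p, hp⟩ else 0) else 0) :=
                (Finset.sum_attach (T e) (fun p =>
                  if e' ∈ p then (if hp : p ∈ T e then f ⟨p, hp⟩ else 0) else 0)).symm
            _ = ∑ i : {p // p ∈ T e}, f i * (if e' ∈ (i : List (V × V)) then 1 else 0) := by
                refine Finset.sum_congr rfl (fun i _ => ?_)
                rw [dif_pos i.2]
                by_cases h : e' ∈ (i : List (V × V)) <;> simp [h]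
            _ ≤ x e' := this
      · exact ⟨fun _ => 0, fun _ => le_refl 0, fun h => absurd h he⟩
    choose g hg0 hgE using key
    refine ⟨g, fun uv P => hg0 uv P, ?_, ?_⟩
    · intro e he
      rw [hTcoe e, finsum_mem_coe_finset]
      exact (hgE e he).1
    · intro e he e' he'
      have hset : {p : List (V × V) | IsDirPath E e.1 e.2 p ∧ p.length ≤ t ∧ e' ∈ p}
          = ↑((T e).filter (fun p => e' ∈ p)) := by
        ext p
        simp only [Set.mem_setOf_eq, Finset.coe_filter, Set.mem_setOf_eq, hmemT]
        tauto
      rw [hset, finsum_mem_coe_finset]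
      exact (hgE e he).2 e' he'
  · -- a flow implies the cut constraints
    rintro ⟨f, hf0, hf1, hfc⟩ e he z hz
    obtain ⟨hz01, hzpath⟩ := hz
    have h1 : 1 ≤ ∑ p ∈ T e, f e p := by
      have := hf1 e he
      rwa [hTcoe e, finsum_mem_coe_finset] at this
    have hcap : ∀ e' ∈ E, ∑ p ∈ (T e).filter (fun p => e' ∈ p), f e p ≤ x e' := by
      intro e' he'
      have := hfc e he e' he'
      have hset : {p : List (V × V) | IsDirPath E e.1 e.2 p ∧ p.length ≤ t ∧ e' ∈ p}
          = ↑((T e).filter (fun p => e' ∈ p)) := by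
        ext p
        simp only [Set.mem_setOf_eq, Finset.coe_filter, Set.mem_setOf_eq, hmemT]
        tauto
      rwa [hset, finsum_mem_coe_finset] at this
    calc (1:ℝ) ≤ ∑ p ∈ T e, f e p := h1
      _ ≤ ∑ p ∈ T e, f e p * ∑ e' ∈ E, (if e' ∈ p then z e' else 0) := by
          refine Finset.sum_le_sum (fun p hpT => ?_)
          obtain ⟨hp, hlen⟩ := (hmemT e p).1 hpT
          rw [hlistsum z hp]
          exact le_mul_of_one_le_right (hf0 e p) (hzpath p hp hlen)
      _ = ∑ e' ∈ E, (∑ p ∈ (T e).filter (fun p => e' ∈ p), f e p) * z e' := by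
          simp_rw [Finset.mul_sum, mul_ite, mul_zero]
          rw [Finset.sum_comm]
          refine Finset.sum_congr rfl (fun e' he' => ?_)
          rw [Finset.sum_mul, ← Finset.sum_filter]
      _ ≤ ∑ e' ∈ E, z e' * x e' := by
          refine Finset.sum_le_sum (fun e' he' => ?_)
          rw [mul_comm (z e')]
          exact mul_le_mul_of_nonneg_right (hcap e' he') (hz01 e' he').1
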